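/- For every integer b ≥ 0, the minimum order of a weighted graph G = (L,H) with L 2-regular, H b-regular, disjoint edge sets, and girth 5 (minimum cycle weight 5 with L-edges weight 1 and H-edges weight 2) is exactly b + 5. -/

import Mathlib

open Classical in
/-- Weight of a walk in `L ⊔ H`: light edges (in `L`) weigh 1, heavy edges weigh 2. -/
noncomputable def wWeight {V : Type*} (L H : SimpleGraph V) {u : V}
    (w : (L ⊔ H).Walk u u) : ℕ :=
  (w.edges.map fun e => if e ∈ L.edgeSet then 1 else 2).sum

/-- `(L,H)` is an `(a,b)`-regular weighted graph of girth `g`. -/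
def IsWGraph {V : Type*} (L H : SimpleGraph V) (a b g : ℕ) : Prop :=
  Disjoint L H ∧
  (∀ v, (L.neighborSet v).ncard = a) ∧
  (∀ v, (H.neighborSet v).ncard = b) ∧
  (∃ (u : V) (w : (L ⊔ H).Walk u u), w.IsCycle ∧ wWeight L H w = g) ∧
  (∀ (u : V) (w : (L ⊔ H).Walk u u), w.IsCycle → g ≤ wWeight L H w)


open SimpleGraph

-- cycle constructors
lemma isCycle3 {V : Type*} {G : SimpleGraph V} {a b c : V}
    (h1 : G.Adj a b) (h2 : G.Adj b c) (h3 : G.Adj c a) (hac : a ≠ c) :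
    (Walk.cons h1 (Walk.cons h2 (Walk.cons h3 Walk.nil))).IsCycle := by
  have hab := h1.ne
  have hbc := h2.ne
  rw [Walk.isCycle_def, Walk.isTrail_def]
  simp_all [Sym2.eq, Sym2.rel_iff', Walk.support_cons]
  tauto

lemma isCycle4 {V : Type*} {G : SimpleGraph V} {a b c d : V}
    (h1 : G.Adj a b) (h2 : G.Adj b c) (h3 : G.Adj c d) (h4 : G.Adj d a)
    (hac : a ≠ c) (hbd : b ≠ d) :
    (Walk.cons h1 (Walk.cons h2 (Walk.cons h3 (Walk.cons h4 Walk.nil)))).IsCycle := by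
  have hab := h1.ne
  have hbc := h2.ne
  have hcd := h3.ne
  have hda := h4.ne
  rw [Walk.isCycle_def, Walk.isTrail_def]
  simp_all [Sym2.eq, Sym2.rel_iff', Walk.support_cons]
  tauto
lemma zmod_cast_ne_zero {n k : ℕ} (h0 : 0 < k) (h : k < n) : (k : ZMod n) ≠ 0 := by
  rw [Ne, ZMod.natCast_eq_zero_iff]
  exact fun hd => absurd (Nat.le_of_dvd h0 hd) (by omega)

lemma zmod_pair_ne {n : ℕ} {a b : ZMod n} (k : ℕ) (h0 : 0 < k) (hk : k < n)
    (hab : a - b = (k : ZMod n)) : a ≠ b := by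
  intro h
  rw [h, sub_self] at hab
  exact zmod_cast_ne_zero h0 hk hab.symm

example {n : ℕ} (hn : 5 ≤ n) (v : ZMod n) : v + 1 ≠ v - 1 :=
  zmod_pair_ne 2 (by norm_num) (by omega) (by push_cast; ring)

def Sset (n : ℕ) : Set (ZMod n) := {0, 1, -1, 2, -2}
def Lg (n : ℕ) : SimpleGraph (ZMod n) := SimpleGraph.fromRel (fun i j => j = i + 1)
def Hg (n : ℕ) : SimpleGraph (ZMod n) := SimpleGraph.fromRel (fun i j => j - i ∉ Sset n)

lemma lg_nbhd {n : ℕ} (hn : 5 ≤ n) (v : ZMod n) :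
    (Lg n).neighborSet v = {v + 1, v - 1} := by
  ext j
  simp only [mem_neighborSet, Lg, SimpleGraph.fromRel_adj, Set.mem_insert_iff,
    Set.mem_singleton_iff]
  have h1 : (1 : ZMod n) ≠ 0 := by
    have := zmod_cast_ne_zero (n := n) (k := 1) one_pos (by omega); simpa using this
  constructor
  · rintro ⟨hne, h | h⟩
    · left; exact h
    · right; rw [h]; ring
  · rintro (h | h)
    · exact ⟨(zmod_pair_ne 1 one_pos (by omega) (by rw [h]; ring)).symm, Or.inl h⟩
    · exact ⟨zmod_pair_ne 1 one_pos (by omega) (by rw [h]; ring), Or.inr (by rw [h]; ring)⟩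

lemma lg_deg {n : ℕ} (hn : 5 ≤ n) (v : ZMod n) :
    ((Lg n).neighborSet v).ncard = 2 := by
  rw [lg_nbhd hn v]
  rw [Set.ncard_pair (zmod_pair_ne 2 (by norm_num) (by omega) (by push_cast; ring))]

lemma hg_adj {n : ℕ} {i j : ZMod n} :
    (Hg n).Adj i j ↔ j - i ∉ Sset n := by
  have hneg : ∀ x : ZMod n, x ∈ Sset n → -x ∈ Sset n := by
    intro x hx
    simp only [Sset, Set.mem_insert_iff, Set.mem_singleton_iff] at hx ⊢
    rcases hx with h|h|h|h|h <;> subst h <;> simp <;> tauto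
  constructor
  · rintro ⟨hne, h | h⟩
    · exact h
    · intro hc; exact h (by simpa [neg_sub] using hneg _ hc)
  · intro h
    refine ⟨fun he => ?_, Or.inl h⟩
    subst he; exact h (by simp [Sset])

lemma hg_nbhd {n : ℕ} (v : ZMod n) :
    (Hg n).neighborSet v = ({v, v + 1, v - 1, v + 2, v - 2} : Set (ZMod n))ᶜ := by
  ext j
  simp only [mem_neighborSet, hg_adj, Set.mem_compl_iff]
  constructor
  · intro h hc
    apply h
    simp only [Set.mem_insert_iff, Set.mem_singleton_iff] at hc
    simp only [Sset, Set.mem_insert_iff, Set.mem_singleton_iff]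
    rcases hc with h|h|h|h|h
    · exact Or.inl (by linear_combination h)
    · exact Or.inr (Or.inl (by linear_combination h))
    · exact Or.inr (Or.inr (Or.inl (by linear_combination h)))
    · exact Or.inr (Or.inr (Or.inr (Or.inl (by linear_combination h))))
    · exact Or.inr (Or.inr (Or.inr (Or.inr (by linear_combination h))))
  · intro h hc
    apply h
    simp only [Sset, Set.mem_insert_iff, Set.mem_singleton_iff] at hc
    simp only [Set.mem_insert_iff, Set.mem_singleton_iff]
    rcases hc with h|h|h|h|h
    · exact Or.inl (by linear_combination h)
    · exact Or.inr (Or.inl (by linear_combination h))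
    · exact Or.inr (Or.inr (Or.inl (by linear_combination h)))
    · exact Or.inr (Or.inr (Or.inr (Or.inl (by linear_combination h))))
    · exact Or.inr (Or.inr (Or.inr (Or.inr (by linear_combination h))))

lemma hg_deg {n : ℕ} (hn : 5 ≤ n) (v : ZMod n) :
    ((Hg n).neighborSet v).ncard = n - 5 := by
  haveI : NeZero n := ⟨by omega⟩
  rw [hg_nbhd v]
  have hT : ({v, v + 1, v - 1, v + 2, v - 2} : Set (ZMod n)).ncard = 5 := by
    rw [Set.ncard_insert_of_notMem ?h1 (Set.toFinite _),
        Set.ncard_insert_of_notMem ?h2 (Set.toFinite _),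
        Set.ncard_insert_of_notMem ?h3 (Set.toFinite _),
        Set.ncard_pair (zmod_pair_ne 4 (by norm_num) (by omega) (by push_cast; ring))]
    case h1 =>
      simp only [Set.mem_insert_iff, Set.mem_singleton_iff]
      push_neg
      exact ⟨(zmod_pair_ne 1 (by norm_num) (by omega) (by push_cast; ring)).symm,
             zmod_pair_ne 1 (by norm_num) (by omega) (by push_cast; ring),
             (zmod_pair_ne 2 (by norm_num) (by omega) (by push_cast; ring)).symm,
             zmod_pair_ne 2 (by norm_num) (by omega) (by push_cast; ring)⟩
    case h2 =>
      simp only [Set.mem_insert_iff, Set.mem_singleton_iff]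
      push_neg
      exact ⟨zmod_pair_ne 2 (by norm_num) (by omega) (by push_cast; ring),
             (zmod_pair_ne 1 (by norm_num) (by omega) (by push_cast; ring)).symm,
             zmod_pair_ne 3 (by norm_num) (by omega) (by push_cast; ring)⟩
    case h3 =>
      simp only [Set.mem_insert_iff, Set.mem_singleton_iff]
      push_neg
      exact ⟨(zmod_pair_ne 3 (by norm_num) (by omega) (by push_cast; ring)).symm,
             zmod_pair_ne 1 (by norm_num) (by omega) (by push_cast; ring)⟩
  have := Set.ncard_add_ncard_compl ({v, v + 1, v - 1, v + 2, v - 2} : Set (ZMod n))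
  rw [hT] at this
  have hcard : Nat.card (ZMod n) = n := Nat.card_zmod n
  omega
lemma list_length_le_sum {α : Type*} (l : List α) (f : α → ℕ) (hf : ∀ e, 1 ≤ f e) :
    l.length ≤ (l.map f).sum := by
  induction l with
  | nil => simp
  | cons a l ih => simp only [List.map_cons, List.sum_cons, List.length_cons]
                   have := hf a; omega

lemma pm_sum {n : ℕ} (hn : 5 ≤ n) {d1 d2 : ZMod n}
    (h1 : d1 = 1 ∨ d1 = -1) (h2 : d2 = 1 ∨ d2 = -1) (hne : d1 + d2 ≠ 0) :
    d1 + d2 = 2 ∨ d1 + d2 = -2 := by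
  rcases h1 with h1 | h1 <;> rcases h2 with h2 | h2 <;> subst h1 h2
  · left; ring
  · exact absurd (by ring) hne
  · exact absurd (by ring) hne
  · right; ring

lemma pm_eq {n : ℕ} {d1 d2 : ZMod n}
    (h1 : d1 = 1 ∨ d1 = -1) (h2 : d2 = 1 ∨ d2 = -1) (hne : d1 + d2 ≠ 0) :
    d1 = d2 := by
  rcases h1 with h1 | h1 <;> rcases h2 with h2 | h2 <;> subst h1 h2
  · rfl
  · exact absurd (by ring) hne
  · exact absurd (by ring) hne
  · rfl
lemma lg_adj {n : ℕ} (hn : 5 ≤ n) {i j : ZMod n} :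
    (Lg n).Adj i j ↔ (j - i = 1 ∨ i - j = 1) := by
  have h1 : (1 : ZMod n) ≠ 0 := by
    have := zmod_cast_ne_zero (n := n) (k := 1) one_pos (by omega)
    simpa using this
  constructor
  · rintro ⟨hne, h | h⟩
    · left; rw [h]; ring
    · right; rw [h]; ring
  · rintro (h | h)
    · refine ⟨fun he => ?_, Or.inl (by rw [← h]; ring)⟩
      rw [he, sub_self] at h; exact h1 h.symm
    · refine ⟨fun he => ?_, Or.inr (by rw [← h]; ring)⟩
      rw [he, sub_self] at h; exact h1 h.symm


lemma isCycle5 {V : Type*} {G : SimpleGraph V} {a b c d e : V}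
    (h1 : G.Adj a b) (h2 : G.Adj b c) (h3 : G.Adj c d) (h4 : G.Adj d e) (h5 : G.Adj e a)
    (hac : a ≠ c) (had : a ≠ d) (hbd : b ≠ d) (hbe : b ≠ e) (hce : c ≠ e) :
    (Walk.cons h1 (Walk.cons h2 (Walk.cons h3 (Walk.cons h4 (Walk.cons h5 Walk.nil))))).IsCycle := by
  have hab := h1.ne
  have hbc := h2.ne
  have hcd := h3.ne
  have hde := h4.ne
  have hea := h5.ne
  rw [Walk.isCycle_def, Walk.isTrail_def]
  simp_all [Sym2.eq, Sym2.rel_iff', Walk.support_cons]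
  tauto

open Classical in
lemma wWeight3 {V : Type*} (L H : SimpleGraph V) {a b c : V}
    (h1 : (L ⊔ H).Adj a b) (h2 : (L ⊔ H).Adj b c) (h3 : (L ⊔ H).Adj c a) :
    wWeight L H (Walk.cons h1 (Walk.cons h2 (Walk.cons h3 Walk.nil))) =
      (if L.Adj a b then 1 else 2) + ((if L.Adj b c then 1 else 2)
        + (if L.Adj c a then 1 else 2)) := by
  simp [wWeight]

open Classical in
lemma wWeight4 {V : Type*} (L H : SimpleGraph V) {a b c d : V}
    (h1 : (L ⊔ H).Adj a b) (h2 : (L ⊔ H).Adj b c) (h3 : (L ⊔ H).Adj c d) (h4 : (L ⊔ H).Adj d a) :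
    wWeight L H (Walk.cons h1 (Walk.cons h2 (Walk.cons h3 (Walk.cons h4 Walk.nil)))) =
      (if L.Adj a b then 1 else 2) + ((if L.Adj b c then 1 else 2)
        + ((if L.Adj c d then 1 else 2) + (if L.Adj d a then 1 else 2))) := by
  simp [wWeight]

open Classical in
lemma wWeight5 {V : Type*} (L H : SimpleGraph V) {a b c d e : V}
    (h1 : (L ⊔ H).Adj a b) (h2 : (L ⊔ H).Adj b c) (h3 : (L ⊔ H).Adj c d)
    (h4 : (L ⊔ H).Adj d e) (h5 : (L ⊔ H).Adj e a) :
    wWeight L H (Walk.cons h1 (Walk.cons h2 (Walk.cons h3 (Walk.cons h4 (Walk.cons h5 Walk.nil))))) =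
      (if L.Adj a b then 1 else 2) + ((if L.Adj b c then 1 else 2)
        + ((if L.Adj c d then 1 else 2) + ((if L.Adj d e then 1 else 2) + (if L.Adj e a then 1 else 2)))) := by
  simp [wWeight]

lemma lg_diff {n : ℕ} (hn : 5 ≤ n) {a b : ZMod n} (h : (Lg n).Adj a b) :
    b - a = 1 ∨ b - a = -1 := by
  rcases (lg_adj hn).mp h with h | h
  · exact Or.inl h
  · exact Or.inr (by linear_combination -h)

lemma no_adj2 {n : ℕ} (hn : 5 ≤ n) {a c : ZMod n}
    (h : c - a = 2 ∨ c - a = -2) : ¬(Lg n ⊔ Hg n).Adj a c := by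
  rintro (hL | hH)
  · rcases lg_diff hn hL with h1 | h1 <;> rcases h with h2 | h2
    · exact @zmod_cast_ne_zero n 1 (by norm_num) (by omega)
        (by push_cast; linear_combination h1 - h2)
    · exact @zmod_cast_ne_zero n 3 (by norm_num) (by omega)
        (by push_cast; linear_combination h2 - h1)
    · exact @zmod_cast_ne_zero n 3 (by norm_num) (by omega)
        (by push_cast; linear_combination h1 - h2)
    · exact @zmod_cast_ne_zero n 1 (by norm_num) (by omega)
        (by push_cast; linear_combination h2 - h1)
  · refine hg_adj.mp hH ?_
    simp only [Sset, Set.mem_insert_iff, Set.mem_singleton_iff]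
    rcases h with h | h
    · exact Or.inr (Or.inr (Or.inr (Or.inl h)))
    · exact Or.inr (Or.inr (Or.inr (Or.inr h)))

lemma girth5 {n : ℕ} (hn : 5 ≤ n) (u : ZMod n) (w : (Lg n ⊔ Hg n).Walk u u)
    (hw : w.IsCycle) : 5 ≤ wWeight (Lg n) (Hg n) w := by
  by_contra hlt
  push_neg at hlt
  have hlen3 := hw.three_le_length
  have hlw : w.length ≤ wWeight (Lg n) (Hg n) w := by
    rw [wWeight, ← SimpleGraph.Walk.length_edges]
    exact list_length_le_sum _ _ (fun e => by split <;> omega)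
  have hnd := (SimpleGraph.Walk.isCycle_def _ |>.mp hw).2.2
  cases w with
  | nil => simp at hlen3
  | cons h1 p =>
    rename_i x
    cases p with
    | nil => simp at hlen3
    | cons h2 p =>
      rename_i y
      cases p with
      | nil => simp at hlen3
      | cons h3 p =>
        rename_i z
        cases p with
        | nil =>
          -- triangle u - x - y - u
          simp only [Walk.support_cons, Walk.support_nil, List.tail_cons, List.nodup_cons,
            List.mem_cons, List.mem_singleton, List.not_mem_nil, or_false,
            List.nodup_nil, and_true, not_or] at hnd
          obtain ⟨⟨hxy, hxu⟩, hyu, -⟩ := hnd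
          rw [wWeight3] at hlt
          by_cases hL1 : (Lg n).Adj u x <;> by_cases hL2 : (Lg n).Adj x y <;>
            by_cases hL3 : (Lg n).Adj y u <;>
            simp only [hL1, hL2, hL3, if_true, if_false] at hlt
          · have hd1 := lg_diff hn hL1
            have hd2 := lg_diff hn hL2
            have hs := pm_sum hn hd1 hd2 (fun hc => hyu (by linear_combination hc))
            refine no_adj2 hn ?_ h3.symm
            rcases hs with h | h
            · exact Or.inl (by linear_combination h)
            · exact Or.inr (by linear_combination h)
          · have hd1 := lg_diff hn hL1
            have hd2 := lg_diff hn hL2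
            have hs := pm_sum hn hd1 hd2 (fun hc => hyu (by linear_combination hc))
            refine no_adj2 hn ?_ h3.symm
            rcases hs with h | h
            · exact Or.inl (by linear_combination h)
            · exact Or.inr (by linear_combination h)
          · have hd1 := lg_diff hn hL1
            have hd3 := lg_diff hn hL3
            have hs := pm_sum hn hd1 hd3 (fun hc => hxy (by linear_combination hc))
            refine no_adj2 hn ?_ h2.symm
            rcases hs with h | h
            · exact Or.inl (by linear_combination h)
            · exact Or.inr (by linear_combination h)
          · omega
          · have hd2 := lg_diff hn hL2
            have hd3 := lg_diff hn hL3
            have hs := pm_sum hn hd2 hd3 (fun hc => hxu (by linear_combination -hc))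
            refine no_adj2 hn ?_ h1.symm
            rcases hs with h | h
            · exact Or.inl (by linear_combination h)
            · exact Or.inr (by linear_combination h)
          · omega
          · omega
          · omega
        | cons h4 p =>
          rename_i t
          cases p with
          | nil =>
            -- quadrilateral u - x - y - z - u
            simp only [Walk.support_cons, Walk.support_nil, List.tail_cons, List.nodup_cons,
              List.mem_cons, List.mem_singleton, List.not_mem_nil, or_false,
              List.nodup_nil, and_true, not_or] at hnd
            obtain ⟨⟨hxy, hxz, hxu⟩, ⟨hyz, hyu⟩, hzu, -⟩ := hnd
            rw [wWeight4] at hlt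
            by_cases hL1 : (Lg n).Adj u x <;> by_cases hL2 : (Lg n).Adj x y <;>
              by_cases hL3 : (Lg n).Adj y z <;> by_cases hL4 : (Lg n).Adj z u <;>
              simp only [hL1, hL2, hL3, hL4, if_true, if_false] at hlt <;>
              try omega
            have hd1 := lg_diff hn hL1
            have hd2 := lg_diff hn hL2
            have hd3 := lg_diff hn hL3
            have hd4 := lg_diff hn hL4
            have e12 : x - u = y - x :=
              pm_eq hd1 hd2 (fun hc => hyu (by linear_combination hc))
            have e23 : y - x = z - y :=
              pm_eq hd2 hd3 (fun hc => hxz (by linear_combination -hc))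
            have e34 : z - y = u - z :=
              pm_eq hd3 hd4 (fun hc => hyu (by linear_combination -hc))
            rcases hd1 with h | h
            · exact @zmod_cast_ne_zero n 4 (by norm_num) (by omega)
                (by push_cast; linear_combination 3 * e12 + 2 * e23 + e34 - 4 * h)
            · exact @zmod_cast_ne_zero n 4 (by norm_num) (by omega)
                (by push_cast; linear_combination -(3 * e12) - 2 * e23 - e34 + 4 * h)
          | cons h5 p =>
            simp only [Walk.length_cons] at hlw
            omega

lemma lhg_disjoint {n : ℕ} (hn : 5 ≤ n) : Disjoint (Lg n) (Hg n) := by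
  rw [← SimpleGraph.disjoint_edgeSet, Set.disjoint_left]
  intro e heL heH
  induction e with
  | h a b =>
    rw [SimpleGraph.mem_edgeSet] at heL heH
    refine hg_adj.mp heH ?_
    simp only [Sset, Set.mem_insert_iff, Set.mem_singleton_iff]
    rcases lg_diff hn heL with h | h
    · exact Or.inr (Or.inl h)
    · exact Or.inr (Or.inr (Or.inl h))

lemma ex_cycle5 {b : ℕ} :
    ∃ (u : ZMod (b+5)) (w : (Lg (b+5) ⊔ Hg (b+5)).Walk u u),
      w.IsCycle ∧ wWeight (Lg (b+5)) (Hg (b+5)) w = 5 := by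
  have hn : 5 ≤ b + 5 := by omega
  rcases Nat.eq_zero_or_pos b with hb | hb
  · subst hb
    have l1 : (Lg (0+5)).Adj 0 1 := (lg_adj hn).mpr (Or.inl (by decide))
    have l2 : (Lg (0+5)).Adj 1 2 := (lg_adj hn).mpr (Or.inl (by decide))
    have l3 : (Lg (0+5)).Adj 2 3 := (lg_adj hn).mpr (Or.inl (by decide))
    have l4 : (Lg (0+5)).Adj 3 4 := (lg_adj hn).mpr (Or.inl (by decide))
    have l5 : (Lg (0+5)).Adj 4 0 := (lg_adj hn).mpr (Or.inl (by decide))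
    have a1 : (Lg (0+5) ⊔ Hg (0+5)).Adj 0 1 := Or.inl l1
    have a2 : (Lg (0+5) ⊔ Hg (0+5)).Adj 1 2 := Or.inl l2
    have a3 : (Lg (0+5) ⊔ Hg (0+5)).Adj 2 3 := Or.inl l3
    have a4 : (Lg (0+5) ⊔ Hg (0+5)).Adj 3 4 := Or.inl l4
    have a5 : (Lg (0+5) ⊔ Hg (0+5)).Adj 4 0 := Or.inl l5
    refine ⟨0, Walk.cons a1 (Walk.cons a2 (Walk.cons a3 (Walk.cons a4 (Walk.cons a5 Walk.nil)))),
      isCycle5 a1 a2 a3 a4 a5 (by decide) (by decide) (by decide) (by decide) (by decide), ?_⟩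
    rw [wWeight5, if_pos l1, if_pos l2, if_pos l3, if_pos l4, if_pos l5]
  · have hn6 : 6 ≤ b + 5 := by omega
    set n := b + 5 with hndef
    have l1 : (Lg n).Adj 0 1 := (lg_adj hn).mpr (Or.inl (by push_cast; ring))
    have l2 : (Lg n).Adj 1 2 := (lg_adj hn).mpr (Or.inl (by push_cast; ring))
    have l3 : (Lg n).Adj 2 3 := (lg_adj hn).mpr (Or.inl (by push_cast; ring))
    have hH : (Hg n).Adj 3 0 := by
      rw [hg_adj]
      simp only [Sset, Set.mem_insert_iff, Set.mem_singleton_iff]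
      push_neg
      refine ⟨?_, ?_, ?_, ?_, ?_⟩
      · exact fun hc => @zmod_cast_ne_zero n 3 (by norm_num) (by omega)
          (by push_cast; linear_combination -hc)
      · exact fun hc => @zmod_cast_ne_zero n 4 (by norm_num) (by omega)
          (by push_cast; linear_combination -hc)
      · exact fun hc => @zmod_cast_ne_zero n 2 (by norm_num) (by omega)
          (by push_cast; linear_combination -hc)
      · exact fun hc => @zmod_cast_ne_zero n 5 (by norm_num) (by omega)
          (by push_cast; linear_combination -hc)
      · exact fun hc => @zmod_cast_ne_zero n 1 (by norm_num) (by omega)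
          (by push_cast; linear_combination -hc)
    have hLn : ¬ (Lg n).Adj 3 0 := by
      intro hc
      rcases lg_diff hn hc with h | h
      · exact @zmod_cast_ne_zero n 4 (by norm_num) (by omega) (by push_cast; linear_combination -h)
      · exact @zmod_cast_ne_zero n 2 (by norm_num) (by omega) (by push_cast; linear_combination -h)
    have a1 : (Lg n ⊔ Hg n).Adj 0 1 := Or.inl l1
    have a2 : (Lg n ⊔ Hg n).Adj 1 2 := Or.inl l2
    have a3 : (Lg n ⊔ Hg n).Adj 2 3 := Or.inl l3
    have a4 : (Lg n ⊔ Hg n).Adj 3 0 := Or.inr hH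
    have d02 : (0 : ZMod n) ≠ 2 :=
      (zmod_pair_ne 2 (by norm_num) (by omega) (by push_cast; ring)).symm
    have d13 : (1 : ZMod n) ≠ 3 :=
      (zmod_pair_ne 2 (by norm_num) (by omega) (by push_cast; ring)).symm
    exact ⟨0, Walk.cons a1 (Walk.cons a2 (Walk.cons a3 (Walk.cons a4 Walk.nil))),
      isCycle4 a1 a2 a3 a4 d02 d13,
      by rw [wWeight4, if_pos l1, if_pos l2, if_pos l3, if_neg hLn]⟩

lemma not_both {V : Type*} {L H : SimpleGraph V} (hd : Disjoint L H) {a b : V}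
    (h1 : L.Adj a b) (h2 : H.Adj a b) : False := by
  rw [← SimpleGraph.disjoint_edgeSet, Set.disjoint_left] at hd
  exact hd (L.mem_edgeSet.mpr h1) (H.mem_edgeSet.mpr h2)

lemma no_tri {V : Type*} {L H : SimpleGraph V}
    (hg : ∀ (u : V) (w : (L ⊔ H).Walk u u), w.IsCycle → 5 ≤ wWeight L H w)
    {a b c : V} (h1 : L.Adj a b) (h2 : L.Adj b c) (h3 : (L ⊔ H).Adj c a)
    (hac : a ≠ c) : False := by
  have hcy := isCycle3 (Or.inl h1 : (L ⊔ H).Adj a b) (Or.inl h2 : (L ⊔ H).Adj b c) h3 hac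
  have h5 := hg a _ hcy
  rw [wWeight3, if_pos h1, if_pos h2] at h5
  split at h5 <;> omega

lemma no_quad {V : Type*} {L H : SimpleGraph V}
    (hg : ∀ (u : V) (w : (L ⊔ H).Walk u u), w.IsCycle → 5 ≤ wWeight L H w)
    {a b c d : V} (h1 : L.Adj a b) (h2 : L.Adj b c) (h3 : L.Adj c d) (h4 : L.Adj d a)
    (hac : a ≠ c) (hbd : b ≠ d) : False := by
  have hcy := isCycle4 ((SimpleGraph.sup_adj L H a b).mpr (Or.inl h1)) ((SimpleGraph.sup_adj L H b c).mpr (Or.inl h2)) ((SimpleGraph.sup_adj L H c d).mpr (Or.inl h3)) ((SimpleGraph.sup_adj L H d a).mpr (Or.inl h4)) hac hbd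
  have h5 := hg a _ hcy
  rw [wWeight4, if_pos h1, if_pos h2, if_pos h3, if_pos h4] at h5
  omega

lemma other_nbr {V : Type*} {L : SimpleGraph V} {u v : V}
    (h2 : (L.neighborSet u).ncard = 2) (hv : L.Adj u v) :
    ∃ w, L.Adj u w ∧ w ≠ v := by
  obtain ⟨a, c, hac, hs⟩ := Set.ncard_eq_two.mp h2
  have hv' : v ∈ L.neighborSet u := hv
  rw [hs] at hv'
  have ha : a ∈ L.neighborSet u := by rw [hs]; exact Set.mem_insert _ _
  have hc : c ∈ L.neighborSet u := by rw [hs]; exact Set.mem_insert_of_mem _ rfl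
  rcases hv' with h | h
  · exact ⟨c, hc, by rw [← h] at hac; exact fun he => hac he.symm⟩
  · exact ⟨a, ha, by rw [← h] at hac; exact hac⟩

lemma lower_bound {n b : ℕ} (L H : SimpleGraph (Fin n)) (h : IsWGraph L H 2 b 5) :
    b + 5 ≤ n := by
  obtain ⟨hd, hL, hH, ⟨v, w0, hc0, -⟩, hg⟩ := h
  obtain ⟨u1, u2, hu12, hset⟩ := Set.ncard_eq_two.mp (hL v)
  have hu1 : L.Adj v u1 := by
    have : u1 ∈ L.neighborSet v := by rw [hset]; exact Set.mem_insert _ _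
    exact this
  have hu2 : L.Adj v u2 := by
    have : u2 ∈ L.neighborSet v := by rw [hset]; exact Set.mem_insert_of_mem _ rfl
    exact this
  obtain ⟨w1, hw1, hw1v⟩ := other_nbr (hL u1) hu1.symm
  obtain ⟨w2, hw2, hw2v⟩ := other_nbr (hL u2) hu2.symm
  -- distinctness
  have hvu1 : v ≠ u1 := hu1.ne
  have hvu2 : v ≠ u2 := hu2.ne
  have hw1u1 : w1 ≠ u1 := fun he => by rw [he] at hw1; exact hw1.ne rfl
  have hw2u2 : w2 ≠ u2 := fun he => by rw [he] at hw2; exact hw2.ne rfl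
  have hw1u2 : w1 ≠ u2 := by
    intro he
    rw [he] at hw1
    exact no_tri hg hu1 hw1 (Or.inl hu2.symm) hvu2
  have hw2u1 : w2 ≠ u1 := by
    intro he
    rw [he] at hw2
    exact no_tri hg hu2 hw2 (Or.inl hu1.symm) hvu1
  have hw12 : w1 ≠ w2 := by
    intro he
    subst he
    exact no_quad hg hu1 hw1 hw2.symm hu2.symm hw1v.symm hu12
  -- the five-set and the heavy neighborhood are disjoint
  have hvN : v ∉ H.neighborSet v := fun hc => H.irrefl hc
  have hu1N : u1 ∉ H.neighborSet v := fun hc => not_both hd hu1 hc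
  have hu2N : u2 ∉ H.neighborSet v := fun hc => not_both hd hu2 hc
  have hw1N : w1 ∉ H.neighborSet v := by
    intro hc
    exact no_tri hg hu1 hw1 (Or.inr (hc : H.Adj v w1).symm) hw1v.symm
  have hw2N : w2 ∉ H.neighborSet v := by
    intro hc
    exact no_tri hg hu2 hw2 (Or.inr (hc : H.Adj v w2).symm) hw2v.symm
  have hdisj : Disjoint ({v, u1, u2, w1, w2} : Set (Fin n)) (H.neighborSet v) := by
    rw [Set.disjoint_left]
    rintro x (rfl | rfl | rfl | rfl | rfl) <;> assumption
  have h5 : ({v, u1, u2, w1, w2} : Set (Fin n)).ncard = 5 := by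
    rw [Set.ncard_insert_of_notMem (by
          simp only [Set.mem_insert_iff, Set.mem_singleton_iff]
          push_neg
          exact ⟨hvu1, hvu2, hw1v.symm.symm ∘ Eq.symm, hw2v.symm.symm ∘ Eq.symm⟩) (Set.toFinite _),
        Set.ncard_insert_of_notMem (by
          simp only [Set.mem_insert_iff, Set.mem_singleton_iff]
          push_neg
          exact ⟨hu12, fun he => hw1u1 he.symm, fun he => hw2u1 he.symm⟩) (Set.toFinite _),
        Set.ncard_insert_of_notMem (by
          simp only [Set.mem_insert_iff, Set.mem_singleton_iff]
          push_neg
          exact ⟨fun he => hw1u2 he.symm, fun he => hw2u2 he.symm⟩) (Set.toFinite _),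
        Set.ncard_pair hw12]
  have hunion := Set.ncard_union_eq hdisj (Set.toFinite _) (Set.toFinite _)
  rw [h5, hH v] at hunion
  have hle : (({v, u1, u2, w1, w2} : Set (Fin n)) ∪ H.neighborSet v).ncard ≤ n := by
    have := Set.ncard_le_ncard (Set.subset_univ
      (({v, u1, u2, w1, w2} : Set (Fin n)) ∪ H.neighborSet v)) (Set.toFinite _)
    rwa [Set.ncard_univ, Nat.card_eq_fintype_card, Fintype.card_fin] at this
  omega

/-- For every `b ≥ 0`, the minimum order of a `(2,b)`-regular weighted graph of
girth 5 is exactly `b + 5`. -/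
theorem stmt_17 (b : ℕ) :
    IsLeast {n : ℕ | ∃ L H : SimpleGraph (Fin n), IsWGraph L H 2 b 5}
      (b + 5) := by
  constructor
  · have hn : 5 ≤ b + 5 := by omega
    refine ⟨Lg (b+5), Hg (b+5), lhg_disjoint hn, lg_deg hn,
      fun v => by exact (hg_deg hn v).trans (by omega : b + 5 - 5 = b), ex_cycle5, girth5 hn⟩
  · rintro n ⟨L, H, h⟩
    exact lower_bound L H h
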